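/- Let λ1 ∈ (0,1), p1 ∈ (0,1], p2 ∈ [0,1], and suppose λ1 < p1/(1 + p1·p2). Define ρ := λ1·(1 − p1 + λ1·p1·p2)/(p1·(1 − λ1)·(1 − λ1·p2)) and π0 := (p1 − λ1·(1 + p1·p2))/(p1·(1 − λ1)). Then π0 · (1 + λ1·p2/(1 − λ1·p2)) · (∑' k : ℕ, ρ^k) = 1. -/

import Mathlib

theorem normalization_dominant1 (l1 p1 p2 : ℝ)
    (hl1 : l1 ∈ Set.Ioo (0:ℝ) 1) (hp1 : p1 ∈ Set.Ioc (0:ℝ) 1) (hp2 : p2 ∈ Set.Icc (0:ℝ) 1)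
    (hstab : l1 < p1 / (1 + p1*p2)) :
    (p1 - l1*(1 + p1*p2)) / (p1 * (1 - l1)) * (1 + l1*p2 / (1 - l1*p2)) *
      (∑' k : ℕ, (l1 * (1 - p1 + l1*p1*p2) / (p1 * (1 - l1) * (1 - l1*p2)))^k) = 1 := by
  obtain ⟨hl0, hl1'⟩ := hl1
  obtain ⟨hp10, hp11⟩ := hp1
  obtain ⟨hp20, hp21⟩ := hp2
  have hpos : (0:ℝ) < 1 + p1*p2 := by nlinarith
  have hstab' : l1 * (1 + p1*p2) < p1 := (lt_div_iff₀ hpos).mp hstab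
  have hlp2 : l1 * p2 < 1 := by nlinarith
  have h1 : (0:ℝ) < 1 - l1 := by linarith
  have h2 : (0:ℝ) < 1 - l1*p2 := by linarith
  have hden : (0:ℝ) < p1 * (1 - l1) * (1 - l1*p2) := by positivity
  set ρ : ℝ := l1 * (1 - p1 + l1*p1*p2) / (p1 * (1 - l1) * (1 - l1*p2)) with hρ
  have hnum : 0 ≤ l1 * (1 - p1 + l1*p1*p2) := by
    apply mul_nonneg hl0.le
    nlinarith [mul_nonneg (mul_nonneg hl0.le hp10.le) hp20]
  have hρ0 : 0 ≤ ρ := div_nonneg hnum hden.le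
  have hρ1 : ρ < 1 := by
    rw [hρ, div_lt_one hden]
    nlinarith
  have hne : p1 - l1*(1 + p1*p2) ≠ 0 := by nlinarith
  have key : 1 - ρ = (p1 - l1*(1 + p1*p2)) / (p1 * (1 - l1) * (1 - l1*p2)) := by
    rw [hρ, eq_div_iff hden.ne', sub_mul, one_mul, div_mul_cancel₀ _ hden.ne']
    ring
  rw [tsum_geometric_of_lt_one hρ0 hρ1, key, inv_div]
  field_simp
  ring
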